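/- Let G = (V, E) be a finite graph such that every connected component of G has at least three edges. Then E can be partitioned as E = E₁ ∪ ⋯ ∪ E_n into pairwise disjoint edge sets such that each E_i is connected (its induced subgraph is connected) and |E_i| ∈ {3, 4, 5, 6} for all i = 1, …, n. -/

import Mathlib

/-- For a graph `G = (V, E)` and edges `E₀ ⊆ E`, `E₀` is connected if the subgraph
`G[E₀]` induced by the edge set `E₀` (on the endpoints of its edges) is connected. -/
def EdgeSetConnected {V : Type*} (s : Set (Sym2 V)) : Prop :=
  ∀ v w : V, (∃ e ∈ s, v ∈ e) → (∃ e ∈ s, w ∈ e) →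
    (SimpleGraph.fromEdgeSet s).Reachable v w

namespace EdgeDecomp

open SimpleGraph

variable {V : Type*}

/-- `v` is covered by the edge set `s`. -/
def Cov (s : Set (Sym2 V)) (v : V) : Prop := ∃ e ∈ s, v ∈ e

lemma reach_mono {s t : Set (Sym2 V)} (h : s ⊆ t) {a b : V}
    (hr : (fromEdgeSet s).Reachable a b) : (fromEdgeSet t).Reachable a b :=
  hr.mono (fromEdgeSet_mono h)

lemma reach_of_mem {s : Set (Sym2 V)} {e : Sym2 V} (he : e ∈ s) {a b : V}
    (ha : a ∈ e) (hb : b ∈ e) : (fromEdgeSet s).Reachable a b := by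
  rcases eq_or_ne a b with rfl | hne
  · exact SimpleGraph.Reachable.refl a
  · refine SimpleGraph.Adj.reachable ?_
    rw [fromEdgeSet_adj]
    have : e = s(a, b) := (Sym2.mem_and_mem_iff hne).mp ⟨ha, hb⟩
    exact ⟨this ▸ he, hne⟩

lemma cov_finite {s : Set (Sym2 V)} (hfin : s.Finite) : {v | Cov s v}.Finite := by
  have : {v | Cov s v} ⊆ ⋃ e ∈ s, {v | v ∈ e} := by
    rintro v ⟨e, he, hv⟩
    exact Set.mem_biUnion he hv
  refine Set.Finite.subset (Set.Finite.biUnion hfin fun e _ => ?_) this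
  induction e with
  | _ a b =>
    refine (((Set.finite_singleton a).union (Set.finite_singleton b))).subset ?_
    intro x hx
    rw [Set.mem_setOf_eq, Sym2.mem_iff] at hx
    rcases hx with rfl | rfl <;> simp

lemma exists_parent {G : SimpleGraph V} {r x : V} (h : G.Reachable r x) (hx : x ≠ r) :
    ∃ u, G.Adj u x ∧ G.dist r u < G.dist r x := by
  obtain ⟨p, hp⟩ := h.exists_walk_length_eq_dist
  have hq : ¬ p.reverse.Nil := SimpleGraph.Walk.not_nil_of_ne hx
  refine ⟨p.reverse.getVert 1, (p.reverse.adj_snd hq).symm, ?_⟩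
  have h1 : G.dist r (p.reverse.getVert 1) ≤ p.reverse.tail.reverse.length :=
    SimpleGraph.dist_le _
  have h2 : p.reverse.tail.length + 1 = p.reverse.length :=
    SimpleGraph.Walk.length_tail_add_one hq
  simp only [SimpleGraph.Walk.length_reverse] at h1 h2
  omega


/-- A BFS-style spanning structure on the edge set `s` rooted at `r`. -/
structure BFS (s : Set (Sym2 V)) (r : V) where
  pa : V → V
  d : V → ℕ
  adj : ∀ ⦃x⦄, Cov s x → x ≠ r → (fromEdgeSet s).Adj (pa x) x
  dlt : ∀ ⦃x⦄, Cov s x → x ≠ r → d (pa x) < d x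

lemma exists_bfs {s : Set (Sym2 V)} (hc : EdgeSetConnected s) {r : V} (hr : Cov s r) :
    Nonempty (BFS s r) := by
  classical
  have key : ∀ x : V, Cov s x → x ≠ r → ∃ u, (fromEdgeSet s).Adj u x ∧
      (fromEdgeSet s).dist r u < (fromEdgeSet s).dist r x := fun x hx hne =>
    exists_parent (hc r x hr hx) hne
  refine ⟨⟨fun x => if h : Cov s x ∧ x ≠ r then (key x h.1 h.2).choose else r,
    (fromEdgeSet s).dist r, fun x hx hne => ?_, fun x hx hne => ?_⟩⟩
  · simp only [dif_pos (And.intro hx hne)]; exact (key x hx hne).choose_spec.1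
  · simp only [dif_pos (And.intro hx hne)]; exact (key x hx hne).choose_spec.2

namespace BFS

variable {s : Set (Sym2 V)} {r : V} (B : BFS s r)

lemma cov_pa {x : V} (hx : Cov s x) (hne : x ≠ r) : Cov s (B.pa x) := by
  have h := B.adj hx hne
  rw [fromEdgeSet_adj] at h
  exact ⟨s(B.pa x, x), h.1, Sym2.mem_mk_left _ _⟩

lemma pa_ne {x : V} (hx : Cov s x) (hne : x ≠ r) : B.pa x ≠ x :=
  (B.adj hx hne).ne

lemma pa_edge_mem {x : V} (hx : Cov s x) (hne : x ≠ r) : s(x, B.pa x) ∈ s := by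
  have h := B.adj hx hne
  rw [fromEdgeSet_adj] at h
  rw [Sym2.eq_swap]
  exact h.1

lemma iter_facts {x : V} (hx : Cov s x) :
    ∀ k, (∀ j < k, B.pa^[j] x ≠ r) → Cov s (B.pa^[k] x) ∧ B.d (B.pa^[k] x) ≤ B.d x := by
  intro k
  induction k with
  | zero => intro _; exact ⟨hx, le_rfl⟩
  | succ k ih =>
    intro hcond
    have h1 := ih (fun j hj => hcond j (Nat.lt_succ_of_lt hj))
    have hne : B.pa^[k] x ≠ r := hcond k (Nat.lt_succ_self k)
    rw [Function.iterate_succ_apply']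
    exact ⟨B.cov_pa h1.1 hne, le_trans (le_of_lt (B.dlt h1.1 hne)) h1.2⟩

/-- `w` lies in the subtree rooted at `u`. -/
def Sub (u w : V) : Prop :=
  Cov s w ∧ ∃ k, B.pa^[k] w = u ∧ ∀ j < k, B.pa^[j] w ≠ r

lemma sub_refl {w : V} (hw : Cov s w) : B.Sub w w :=
  ⟨hw, 0, rfl, by omega⟩

lemma sub_cov {u w : V} (h : B.Sub u w) : Cov s w := h.1

lemma sub_cov_top {u w : V} (h : B.Sub u w) : Cov s u := by
  obtain ⟨hw, k, hk, hcond⟩ := h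
  exact hk ▸ (B.iter_facts hw k hcond).1

lemma sub_d {u w : V} (h : B.Sub u w) : B.d u ≤ B.d w := by
  obtain ⟨hw, k, hk, hcond⟩ := h
  exact hk ▸ (B.iter_facts hw k hcond).2

lemma sub_step {u x : V} (hx : Cov s x) (hne : x ≠ r) (h : B.Sub u (B.pa x)) : B.Sub u x := by
  obtain ⟨hw, k, hk, hcond⟩ := h
  refine ⟨hx, k + 1, ?_, ?_⟩
  · rw [Function.iterate_succ_apply]; exact hk
  · intro j hj
    cases j with
    | zero => exact hne
    | succ j => rw [Function.iterate_succ_apply]; exact hcond j (by omega)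

lemma sub_trans {u w x : V} (h1 : B.Sub u w) (h2 : B.Sub w x) : B.Sub u x := by
  obtain ⟨hx, k1, hk1, hcond1⟩ := h2
  obtain ⟨hw, k2, hk2, hcond2⟩ := h1
  refine ⟨hx, k2 + k1, ?_, ?_⟩
  · rw [Function.iterate_add_apply, hk1, hk2]
  · intro j hj
    rcases lt_or_ge j k1 with h | h
    · exact hcond1 j h
    · have : j = (j - k1) + k1 := by omega
      rw [this, Function.iterate_add_apply, hk1]
      exact hcond2 (j - k1) (by omega)

lemma not_sub_root {u : V} (hne : u ≠ r) : ¬ B.Sub u r := by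
  rintro ⟨_, k, hk, hcond⟩
  cases k with
  | zero => exact hne hk.symm
  | succ k => exact hcond 0 (by omega) rfl

lemma sub_root {w : V} (hw : Cov s w) : B.Sub r w := by
  have : ∀ n, ∀ w, Cov s w → B.d w = n → B.Sub r w := by
    intro n
    induction n using Nat.strong_induction_on with
    | _ n ih =>
      intro w hw hd
      rcases eq_or_ne w r with rfl | hne
      · exact B.sub_refl hw
      · have hc := B.cov_pa hw hne
        have hlt := B.dlt hw hne
        exact B.sub_step hw hne (ih (B.d (B.pa w)) (by omega) _ hc rfl)
  exact this (B.d w) w hw rfl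

/-- The set of edges of `s` incident to the subtree rooted at `u`. -/
def sinc (u : V) : Set (Sym2 V) := {e ∈ s | ∃ z ∈ e, B.Sub u z}

lemma sinc_subset (u : V) : B.sinc u ⊆ s := fun _ he => he.1

lemma sinc_root (hr : Cov s r) : B.sinc r = s := by
  refine Set.Subset.antisymm (B.sinc_subset r) fun e he => ⟨he, ?_⟩
  induction e with
  | _ a b => exact ⟨a, Sym2.mem_mk_left _ _, B.sub_root ⟨s(a, b), he, Sym2.mem_mk_left _ _⟩⟩

lemma reach_to_top {u : V} : ∀ {w : V}, B.Sub u w →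
    (fromEdgeSet (B.sinc u)).Reachable w u := by
  suffices h : ∀ k, ∀ w, Cov s w → B.pa^[k] w = u → (∀ j < k, B.pa^[j] w ≠ r) →
      (fromEdgeSet (B.sinc u)).Reachable w u by
    rintro w ⟨hw, k, hk, hcond⟩
    exact h k w hw hk hcond
  intro k
  induction k with
  | zero => rintro w hw rfl _; exact SimpleGraph.Reachable.refl w
  | succ k ih =>
    intro w hw hk hcond
    have hne : w ≠ r := hcond 0 (by omega)
    have hsub : B.Sub u (B.pa w) := by
      refine ⟨B.cov_pa hw hne, k, ?_, ?_⟩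
      · rw [← Function.iterate_succ_apply]; exact hk
      · intro j hj
        rw [← Function.iterate_succ_apply]
        exact hcond (j + 1) (by omega)
    have hmem : s(w, B.pa w) ∈ B.sinc u :=
      ⟨B.pa_edge_mem hw hne, w, Sym2.mem_mk_left _ _, B.sub_step hw hne hsub⟩
    have hadj : (fromEdgeSet (B.sinc u)).Adj w (B.pa w) := by
      rw [fromEdgeSet_adj]
      exact ⟨hmem, (B.pa_ne hw hne).symm⟩
    refine hadj.reachable.trans ?_
    exact ih (B.pa w) (B.cov_pa hw hne) (by rw [← Function.iterate_succ_apply]; exact hk)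
      (fun j hj => by rw [← Function.iterate_succ_apply]; exact hcond (j + 1) (by omega))

lemma reach_sinc {u a : V} (ha : Cov (B.sinc u) a) :
    (fromEdgeSet (B.sinc u)).Reachable a u := by
  obtain ⟨e, he, hae⟩ := ha
  obtain ⟨z, hz, hsub⟩ := he.2
  exact (reach_of_mem he hae hz).trans (B.reach_to_top hsub)

lemma sinc_conn (u : V) : EdgeSetConnected (B.sinc u) := fun a b ha hb =>
  (B.reach_sinc ha).trans (B.reach_sinc hb).symm

end BFS


namespace BFS

variable {s : Set (Sym2 V)} {r : V} (B : BFS s r)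

lemma rem_conn (U : Set V) (t : Set (Sym2 V))
    (hcl : ∀ x, Cov s x → x ≠ r → B.pa x ∈ U → x ∈ U)
    (hI : ∀ f ∈ s, (∃ z ∈ f, z ∈ U) → f ∈ t)
    (hT : ∀ x, Cov s x → x ≠ r → s(x, B.pa x) ∈ t → x ∈ U) :
    EdgeSetConnected (s \ t) := by
  have key : ∀ k, ∀ w, Cov s w → w ∉ U → B.pa^[k] w = r → (∀ j < k, B.pa^[j] w ≠ r) →
      (fromEdgeSet (s \ t)).Reachable w r := by
    intro k
    induction k with
    | zero =>
      intro w _ _ hk _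
      rw [Function.iterate_zero_apply] at hk
      subst hk
      exact SimpleGraph.Reachable.refl w
    | succ k ih =>
      intro w hw hwU hk hcond
      have hne : w ≠ r := hcond 0 (by omega)
      have hpne : B.pa w ∉ U := fun h => hwU (hcl w hw hne h)
      have hmem : s(w, B.pa w) ∈ s \ t := by
        refine ⟨B.pa_edge_mem hw hne, fun ht => ?_⟩
        exact hwU (hT w hw hne ht)
      have hadj : (fromEdgeSet (s \ t)).Adj w (B.pa w) := by
        rw [fromEdgeSet_adj]
        exact ⟨hmem, (B.pa_ne hw hne).symm⟩
      refine hadj.reachable.trans ?_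
      exact ih (B.pa w) (B.cov_pa hw hne) hpne
        (by rw [← Function.iterate_succ_apply]; exact hk)
        (fun j hj => by rw [← Function.iterate_succ_apply]; exact hcond (j + 1) (by omega))
  have main : ∀ c, Cov (s \ t) c → (fromEdgeSet (s \ t)).Reachable c r := by
    rintro c ⟨f, hf, hcf⟩
    have hcU : c ∉ U := fun h => hf.2 (hI f hf.1 ⟨c, hcf, h⟩)
    have hcov : Cov s c := ⟨f, hf.1, hcf⟩
    obtain ⟨_, k, hk, hcond⟩ := B.sub_root hcov
    exact key k c hcov hcU hk hcond
  exact fun a b ha hb => (main a ha).trans (main b hb).symm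

end BFS

lemma accumulate {X : Type*} :
    ∀ n (F : Set (Set X)), F.Finite → F.ncard = n → (∀ p ∈ F, p.Finite ∧ p.ncard ≤ 2) →
      3 ≤ (⋃₀ F).ncard → ∃ F' ⊆ F, 3 ≤ (⋃₀ F').ncard ∧ (⋃₀ F').ncard ≤ 4 := by
  intro n
  induction n using Nat.strong_induction_on with
  | _ n ih =>
    intro F hfin hcard hb h3
    have hne : F.Nonempty := by
      rcases Set.eq_empty_or_nonempty F with rfl | h
      · simp at h3
      · exact h
    obtain ⟨p₀, hp₀⟩ := hne
    set F₁ := F \ {p₀} with hF₁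
    have hfin1 : F₁.Finite := hfin.diff
    by_cases h1 : 3 ≤ (⋃₀ F₁).ncard
    · obtain ⟨F', hsub, h⟩ := ih F₁.ncard
        (by
          rw [← hcard]
          refine Set.ncard_lt_ncard ?_ hfin
          rw [Set.ssubset_iff_of_subset Set.diff_subset]
          exact ⟨p₀, hp₀, fun h => h.2 rfl⟩)
        F₁ hfin1 rfl (fun p hp => hb p hp.1) h1
      exact ⟨F', hsub.trans Set.diff_subset, h⟩
    · refine ⟨F, Set.Subset.rfl, h3, ?_⟩
      push_neg at h1
      have hsub : ⋃₀ F ⊆ ⋃₀ F₁ ∪ p₀ := by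
        rintro x ⟨p, hp, hxp⟩
        rcases eq_or_ne p p₀ with rfl | hne
        · exact Or.inr hxp
        · exact Or.inl ⟨p, ⟨hp, hne⟩, hxp⟩
      have hfinU : (⋃₀ F₁ ∪ p₀).Finite :=
        (hfin1.sUnion fun p hp => (hb p hp.1).1).union (hb p₀ hp₀).1
      calc (⋃₀ F).ncard ≤ (⋃₀ F₁ ∪ p₀).ncard := Set.ncard_le_ncard hsub hfinU
        _ ≤ (⋃₀ F₁).ncard + p₀.ncard := Set.ncard_union_le _ _
        _ ≤ 4 := by have := (hb p₀ hp₀).2; omega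

lemma lemC {s : Set (Sym2 V)} (hfin : s.Finite) (hc : EdgeSetConnected s)
    (h5 : 5 ≤ s.ncard) :
    ∃ t ⊆ s, (t.ncard = 3 ∨ t.ncard = 4) ∧ EdgeSetConnected t ∧ EdgeSetConnected (s \ t) := by
  classical
  have hs_ne : s.Nonempty := by
    rcases Set.eq_empty_or_nonempty s with rfl | h
    · simp at h5
    · exact h
  obtain ⟨e₀, he₀⟩ := hs_ne
  obtain ⟨r, hre⟩ : ∃ x, x ∈ e₀ := by
    induction e₀ with
    | _ a b => exact ⟨a, Sym2.mem_mk_left _ _⟩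
  have hr : Cov s r := ⟨e₀, he₀, hre⟩
  obtain ⟨B⟩ := exists_bfs hc hr
  -- the set of "heavy" vertices
  set T : Set V := {u | Cov s u ∧ 3 ≤ (B.sinc u).ncard} with hT
  have hTfin : T.Finite := (cov_finite hfin).subset fun u hu => hu.1
  have hrT : r ∈ T := ⟨hr, by rw [B.sinc_root hr]; omega⟩
  obtain ⟨v, hvT, hvmax⟩ := Set.exists_max_image T B.d hTfin ⟨r, hrT⟩
  have hv_cov : Cov s v := hvT.1
  have hv3 : 3 ≤ (B.sinc v).ncard := hvT.2
  -- children of v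
  set kids : Set V := {u | Cov s u ∧ u ≠ r ∧ B.pa u = v} with hkids
  have kid_small : ∀ u ∈ kids, (B.sinc u).ncard ≤ 2 := by
    intro u hu
    by_contra h
    push_neg at h
    have huT : u ∈ T := ⟨hu.1, h⟩
    have := hvmax u huT
    have hlt := B.dlt hu.1 hu.2.1
    rw [hu.2.2] at hlt
    omega
  have sub_v_kid : ∀ u ∈ kids, B.Sub v u := by
    intro u hu
    exact ⟨hu.1, 1, by simpa using hu.2.2, by intro j hj; interval_cases j; exact hu.2.1⟩
  have hsinc_fin : ∀ u, (B.sinc u).Finite := fun u => hfin.subset (B.sinc_subset u)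
  by_cases hsmall : v ≠ r ∧ (B.sinc v).ncard = 3
  · -- take the whole branch at v
    refine ⟨B.sinc v, B.sinc_subset v, Or.inl hsmall.2, B.sinc_conn v, ?_⟩
    refine B.rem_conn {z | B.Sub v z} (B.sinc v) ?_ ?_ ?_
    · exact fun x hx hne h => B.sub_step hx hne h
    · exact fun f hf ⟨z, hz, hzU⟩ => ⟨hf, z, hz, hzU⟩
    · rintro x hx hne ⟨_, z, hz, hsub⟩
      rw [Sym2.mem_iff] at hz
      rcases hz with rfl | rfl
      · exact hsub
      · exact B.sub_step hx hne hsub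
  · -- accumulate small pieces hanging at v
    have hbig : v = r ∨ 4 ≤ (B.sinc v).ncard := by
      rcases eq_or_ne v r with h | h
      · exact Or.inl h
      · refine Or.inr ?_
        rcases Nat.lt_or_ge (B.sinc v).ncard 4 with h4 | h4
        · exact absurd ⟨h, by omega⟩ hsmall
        · exact h4
    set A : Set (Sym2 V) := {e ∈ B.sinc v | v = r ∨ e ≠ s(v, B.pa v)} with hA
    have hA_sub : A ⊆ B.sinc v := fun e he => he.1
    have hA_fin : A.Finite := (hsinc_fin v).subset hA_sub
    have hA3 : 3 ≤ A.ncard := by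
      rcases hbig with rfl | h4
      · have : A = s := by
          rw [hA, B.sinc_root hr]
          ext e; simp
        rw [this]; omega
      · have hsub : B.sinc v ⊆ A ∪ {s(v, B.pa v)} := by
          intro e he
          by_cases h : e = s(v, B.pa v)
          · exact Or.inr h
          · exact Or.inl ⟨he, Or.inr h⟩
        have := Set.ncard_le_ncard hsub (hA_fin.union (Set.finite_singleton _))
        have := Set.ncard_union_le A {s(v, B.pa v)}
        rw [Set.ncard_singleton] at this
        omega
    have singleton_key : ∀ e ∈ A, (∀ u ∈ kids, e ∉ B.sinc u) → v ∈ e := by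
      intro e heA hnk
      obtain ⟨⟨hes, z, hze, hzcov, k, hk, hcond⟩, _⟩ := heA
      cases k with
      | zero => rwa [show z = v from hk] at hze
      | succ k =>
        exfalso
        set u := B.pa^[k] z with hu
        have hcondk : ∀ j < k, B.pa^[j] z ≠ r := fun j hj => hcond j (by omega)
        have hucov : Cov s u := (B.iter_facts hzcov k hcondk).1
        have hune : u ≠ r := hcond k (by omega)
        have hpau : B.pa u = v := by
          have : B.pa^[k + 1] z = B.pa (B.pa^[k] z) := Function.iterate_succ_apply' _ _ _
          rw [hu, ← this]; exact hk
        have hzu : B.Sub u z := ⟨hzcov, k, rfl, hcondk⟩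
        exact hnk u ⟨hucov, hune, hpau⟩ ⟨hes, z, hze, hzu⟩
    have kid_sinc_sub_A : ∀ u ∈ kids, B.sinc u ⊆ A := by
      intro u hu e he
      obtain ⟨hes, z, hze, hzu⟩ := he
      refine ⟨⟨hes, z, hze, B.sub_trans (sub_v_kid u hu) hzu⟩, ?_⟩
      rcases eq_or_ne v r with h | h
      · exact Or.inl h
      · refine Or.inr fun heq => ?_
        have hdz := B.sub_d hzu
        have hduv : B.d v < B.d u := by
          have := B.dlt hu.1 hu.2.1
          rwa [hu.2.2] at this
        have hz2 : z = v ∨ z = B.pa v := by rwa [heq, Sym2.mem_iff] at hze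
        rcases hz2 with rfl | rfl
        · omega
        · have := B.dlt hv_cov h
          omega
    set F : Set (Set (Sym2 V)) :=
      {p | (∃ u ∈ kids, p = B.sinc u) ∨
        (∃ e ∈ A, (∀ u ∈ kids, e ∉ B.sinc u) ∧ v ∈ e ∧ p = {e})} with hF
    have hFfin : F.Finite := by
      have h1 : F ⊆ (fun u => B.sinc u) '' kids ∪ (fun e => ({e} : Set (Sym2 V))) '' A := by
        rintro p (⟨u, hu, rfl⟩ | ⟨e, he, _, _, rfl⟩)
        · exact Or.inl ⟨u, hu, rfl⟩
        · exact Or.inr ⟨e, he, rfl⟩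
      have hkfin : kids.Finite := (cov_finite hfin).subset fun u hu => hu.1
      exact ((hkfin.image _).union (hA_fin.image _)).subset h1
    have hFb : ∀ p ∈ F, p.Finite ∧ p.ncard ≤ 2 := by
      rintro p (⟨u, hu, rfl⟩ | ⟨e, _, _, _, rfl⟩)
      · exact ⟨hsinc_fin u, kid_small u hu⟩
      · exact ⟨Set.finite_singleton e, by simp⟩
    have hUF : ⋃₀ F = A := by
      apply Set.Subset.antisymm
      · rintro x ⟨p, (⟨u, hu, rfl⟩ | ⟨e, he, _, _, rfl⟩), hxp⟩
        · exact kid_sinc_sub_A u hu hxp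
        · rwa [Set.mem_singleton_iff.mp hxp]
      · intro e heA
        by_cases h : ∃ u ∈ kids, e ∈ B.sinc u
        · obtain ⟨u, hu, heu⟩ := h
          exact ⟨B.sinc u, Or.inl ⟨u, hu, rfl⟩, heu⟩
        · push_neg at h
          exact ⟨{e}, Or.inr ⟨e, heA, h, singleton_key e heA h, rfl⟩, rfl⟩
    obtain ⟨F', hF'sub, hlo, hhi⟩ := accumulate F.ncard F hFfin rfl hFb (by rw [hUF]; exact hA3)
    set t : Set (Sym2 V) := ⋃₀ F' with ht
    have htA : t ⊆ A := by rw [← hUF]; exact Set.sUnion_subset_sUnion hF'sub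
    have hts : t ⊆ s := htA.trans (hA_sub.trans (B.sinc_subset v))
    have hreach : ∀ a, Cov t a → (fromEdgeSet t).Reachable a v := by
      rintro a ⟨f, hf, haf⟩
      obtain ⟨p, hpF', hfp⟩ := hf
      have hsub_t : p ⊆ t := fun x hx => ⟨p, hpF', hx⟩
      rcases hF'sub hpF' with ⟨u, hu, rfl⟩ | ⟨e, _, _, hve, rfl⟩
      · refine reach_mono hsub_t ?_
        refine (B.reach_sinc ⟨f, hfp, haf⟩).trans ?_
        have hmem : s(u, B.pa u) ∈ B.sinc u :=
          ⟨B.pa_edge_mem hu.1 hu.2.1, u, Sym2.mem_mk_left _ _, B.sub_refl hu.1⟩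
        have hadj : (fromEdgeSet (B.sinc u)).Adj u v := by
          rw [← hu.2.2, fromEdgeSet_adj]
          exact ⟨hmem, (B.pa_ne hu.1 hu.2.1).symm⟩
        exact hadj.reachable
      · refine reach_mono hsub_t ?_
        rw [Set.mem_singleton_iff.mp hfp] at haf
        exact reach_of_mem (Set.mem_singleton e) haf hve
    have ht_conn : EdgeSetConnected t := fun a b ha hb =>
      (hreach a ha).trans (hreach b hb).symm
    have ht_fin : t.Finite := hfin.subset hts
    refine ⟨t, hts, by omega, ht_conn, ?_⟩
    refine B.rem_conn {z | ∃ u ∈ kids, B.sinc u ∈ F' ∧ B.Sub u z} t ?_ ?_ ?_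
    · rintro x hx hne ⟨u, hu, huF', hsub⟩
      exact ⟨u, hu, huF', B.sub_step hx hne hsub⟩
    · rintro f hf ⟨z, hz, u, hu, huF', hsub⟩
      exact ⟨B.sinc u, huF', hf, z, hz, hsub⟩
    · rintro x hx hne hxt
      obtain ⟨p, hpF', hep⟩ := hxt
      rcases hF'sub hpF' with ⟨u, hu, rfl⟩ | ⟨e, heA, hnk, hve, rfl⟩
      · obtain ⟨_, z, hze, hsub⟩ := hep
        rw [Sym2.mem_iff] at hze
        rcases hze with rfl | rfl
        · exact ⟨u, hu, hpF', hsub⟩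
        · exact ⟨u, hu, hpF', B.sub_step hx hne hsub⟩
      · exfalso
        rw [Set.mem_singleton_iff] at hep
        subst hep
        rw [Sym2.mem_iff] at hve
        rcases hve with rfl | rfl
        · rcases heA.2 with h | h
          · exact hne h
          · exact h rfl
        · exact hnk x ⟨hx, hne, rfl⟩ ⟨B.pa_edge_mem hx hne, x, Sym2.mem_mk_left _ _, B.sub_refl hx⟩


lemma lemE : ∀ n {s : Set (Sym2 V)}, s.ncard = n → s.Finite → EdgeSetConnected s →
    3 ≤ s.ncard →
    ∃ L : List (Set (Sym2 V)),
      (∀ p ∈ L, p ⊆ s ∧ EdgeSetConnected p ∧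
        (p.ncard = 3 ∨ p.ncard = 4 ∨ p.ncard = 5 ∨ p.ncard = 6)) ∧
      (∀ e ∈ s, ∃ p ∈ L, e ∈ p) ∧ List.Pairwise Disjoint L := by
  intro n
  induction n using Nat.strong_induction_on with
  | _ n ih =>
    intro s hn hfin hc h3
    by_cases h6 : s.ncard ≤ 6
    · refine ⟨[s], ?_, ?_, by simp⟩
      · intro p hp
        rw [List.mem_singleton] at hp
        subst hp
        exact ⟨Set.Subset.rfl, hc, by omega⟩
      · intro e he
        exact ⟨s, List.mem_singleton_self s, he⟩
    · push_neg at h6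
      obtain ⟨t, hts, htcard, htconn, hrem⟩ := lemC hfin hc (by omega)
      have htfin : t.Finite := hfin.subset hts
      have hcard : (s \ t).ncard = s.ncard - t.ncard := Set.ncard_diff hts htfin
      have ht3 : 3 ≤ t.ncard := by omega
      obtain ⟨L, hL1, hL2, hL3⟩ := ih (s \ t).ncard (by omega) rfl (hfin.diff) hrem (by omega)
      refine ⟨t :: L, ?_, ?_, ?_⟩
      · intro p hp
        rcases List.mem_cons.mp hp with rfl | hp
        · exact ⟨hts, htconn, by omega⟩
        · obtain ⟨hsub, h2, h3'⟩ := hL1 p hp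
          exact ⟨hsub.trans Set.diff_subset, h2, h3'⟩
      · intro e he
        by_cases het : e ∈ t
        · exact ⟨t, List.mem_cons_self, het⟩
        · obtain ⟨p, hp, hep⟩ := hL2 e ⟨he, het⟩
          exact ⟨p, List.mem_cons_of_mem t hp, hep⟩
      · refine List.Pairwise.cons ?_ hL3
        intro p hp
        rw [Set.disjoint_left]
        intro x hxt hxp
        exact ((hL1 p hp).1 hxp).2 hxt

/-- The edge set of the connected component of `v`. -/
def comp (G : SimpleGraph V) (v : V) : Set (Sym2 V) :=
  {e ∈ G.edgeSet | ∃ w, w ∈ e ∧ G.Reachable v w}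

lemma comp_subset (G : SimpleGraph V) (v : V) : comp G v ⊆ G.edgeSet := fun _ he => he.1

lemma reach_of_edge {G : SimpleGraph V} {e : Sym2 V} (he : e ∈ G.edgeSet) {a b : V}
    (ha : a ∈ e) (hb : b ∈ e) : G.Reachable a b := by
  rcases eq_or_ne a b with rfl | hne
  · exact SimpleGraph.Reachable.refl a
  · have : e = s(a, b) := (Sym2.mem_and_mem_iff hne).mp ⟨ha, hb⟩
    subst this
    exact ((SimpleGraph.mem_edgeSet G).mp he).reachable

lemma walk_reach {G : SimpleGraph V} : ∀ {x v : V} (p : G.Walk x v),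
    (fromEdgeSet (comp G v)).Reachable x v := by
  intro x v p
  induction p with
  | nil => exact SimpleGraph.Reachable.refl _
  | @cons a b c h q ihq =>
    have hedge : s(a, b) ∈ comp G c :=
      ⟨(SimpleGraph.mem_edgeSet G).mpr h, b, Sym2.mem_mk_right _ _, SimpleGraph.Reachable.symm ⟨q⟩⟩
    have hadj : (fromEdgeSet (comp G c)).Adj a b := by
      rw [fromEdgeSet_adj]
      exact ⟨hedge, h.ne⟩
    exact hadj.reachable.trans ihq

lemma comp_conn (G : SimpleGraph V) (v : V) : EdgeSetConnected (comp G v) := by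
  have main : ∀ x, Cov (comp G v) x → (fromEdgeSet (comp G v)).Reachable x v := by
    rintro x ⟨e, ⟨hes, w, hwe, hvw⟩, hxe⟩
    have hxw : G.Reachable x w := reach_of_edge hes hxe hwe
    have hxv : G.Reachable x v := hxw.trans hvw.symm
    obtain ⟨p⟩ := hxv
    exact walk_reach p
  exact fun a b ha hb => (main a ha).trans (main b hb).symm

lemma comp_eq_of_mem {G : SimpleGraph V} {v w : V} {e : Sym2 V}
    (hv : e ∈ comp G v) (hw : e ∈ comp G w) : comp G v = comp G w := by
  obtain ⟨hes, a, hae, hva⟩ := hv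
  obtain ⟨_, b, hbe, hwb⟩ := hw
  have hvw : G.Reachable v w := (hva.trans (reach_of_edge hes hae hbe)).trans hwb.symm
  ext f
  constructor
  · rintro ⟨hfs, z, hzf, hvz⟩
    exact ⟨hfs, z, hzf, hvw.symm.trans hvz⟩
  · rintro ⟨hfs, z, hzf, hwz⟩
    exact ⟨hfs, z, hzf, hvw.trans hwz⟩

end EdgeDecomp

theorem edge_decomposition {V : Type*} [Fintype V] (G : SimpleGraph V)
    (hcomp : ∀ v : V, 3 ≤ {e ∈ G.edgeSet | ∃ w, w ∈ e ∧ G.Reachable v w}.ncard) :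
    ∃ (n : ℕ) (E : Fin n → Set (Sym2 V)),
      (⋃ i, E i) = G.edgeSet ∧
      (∀ i j, i ≠ j → Disjoint (E i) (E j)) ∧
      (∀ i, EdgeSetConnected (E i) ∧ (E i).ncard ∈ ({3, 4, 5, 6} : Set ℕ)) := by
  classical
  have hcomp' : ∀ v : V, 3 ≤ (EdgeDecomp.comp G v).ncard := hcomp
  have hcs : (Set.range (EdgeDecomp.comp G)).Finite := Set.finite_range _
  set csF : Finset (Set (Sym2 V)) := hcs.toFinset with hcsF
  have hprop : ∀ c ∈ csF, ∃ L : List (Set (Sym2 V)),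
      (∀ p ∈ L, p ⊆ c ∧ EdgeSetConnected p ∧
        (p.ncard = 3 ∨ p.ncard = 4 ∨ p.ncard = 5 ∨ p.ncard = 6)) ∧
      (∀ e ∈ c, ∃ p ∈ L, e ∈ p) ∧ List.Pairwise Disjoint L := by
    intro c hc
    rw [hcsF, Set.Finite.mem_toFinset] at hc
    obtain ⟨v, rfl⟩ := hc
    exact EdgeDecomp.lemE (EdgeDecomp.comp G v).ncard rfl (Set.toFinite _)
      (EdgeDecomp.comp_conn G v) (hcomp' v)
  choose dec hdec1 hdec2 hdec3 using hprop
  set L : List (Set (Sym2 V)) :=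
    (csF.toList.attach.map (fun c => dec c.1 (Finset.mem_toList.mp c.2))).flatten with hL
  have hmemL : ∀ p ∈ L, ∃ (c : Set (Sym2 V)) (hc : c ∈ csF), p ∈ dec c hc := by
    intro p hp
    rw [hL, List.mem_flatten] at hp
    obtain ⟨l', hl', hpl'⟩ := hp
    rw [List.mem_map] at hl'
    obtain ⟨⟨c, hc⟩, _, rfl⟩ := hl'
    exact ⟨c, Finset.mem_toList.mp hc, hpl'⟩
  have hLprops : ∀ p ∈ L, p ⊆ G.edgeSet ∧ EdgeSetConnected p ∧
      (p.ncard = 3 ∨ p.ncard = 4 ∨ p.ncard = 5 ∨ p.ncard = 6) := by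
    intro p hp
    obtain ⟨c, hc, hpc⟩ := hmemL p hp
    have hcr : c ∈ Set.range (EdgeDecomp.comp G) := by
      rw [hcsF, Set.Finite.mem_toFinset] at hc; exact hc
    obtain ⟨v, rfl⟩ := hcr
    obtain ⟨h1, h2, h3⟩ := hdec1 _ hc p hpc
    exact ⟨h1.trans (EdgeDecomp.comp_subset G v), h2, h3⟩
  have hcover : ∀ e ∈ G.edgeSet, ∃ p ∈ L, e ∈ p := by
    intro e he
    obtain ⟨a, hae⟩ : ∃ x, x ∈ e := by
      induction e with
      | _ x y => exact ⟨x, Sym2.mem_mk_left _ _⟩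
    have hec : e ∈ EdgeDecomp.comp G a := ⟨he, a, hae, SimpleGraph.Reachable.refl a⟩
    have hcF : EdgeDecomp.comp G a ∈ csF := by
      rw [hcsF, Set.Finite.mem_toFinset]; exact ⟨a, rfl⟩
    obtain ⟨p, hp, hep⟩ := hdec2 _ hcF e hec
    refine ⟨p, ?_, hep⟩
    rw [hL, List.mem_flatten]
    refine ⟨dec (EdgeDecomp.comp G a) hcF, ?_, hp⟩
    rw [List.mem_map]
    exact ⟨⟨EdgeDecomp.comp G a, Finset.mem_toList.mpr hcF⟩, List.mem_attach _ _, rfl⟩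
  have hpair : List.Pairwise Disjoint L := by
    rw [hL, List.pairwise_flatten]
    constructor
    · intro l' hl'
      rw [List.mem_map] at hl'
      obtain ⟨⟨c, hc⟩, _, rfl⟩ := hl'
      exact hdec3 _ _
    · rw [List.pairwise_map]
      have hnd : csF.toList.attach.Pairwise (· ≠ ·) :=
        (List.nodup_attach.mpr csF.nodup_toList)
      refine hnd.imp ?_
      rintro ⟨c₁, hc₁⟩ ⟨c₂, hc₂⟩ hne x hx y hy
      have hc₁F : c₁ ∈ csF := Finset.mem_toList.mp hc₁
      have hc₂F : c₂ ∈ csF := Finset.mem_toList.mp hc₂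
      have hxc : x ⊆ c₁ := (hdec1 _ hc₁F x hx).1
      have hyc : y ⊆ c₂ := (hdec1 _ hc₂F y hy).1
      have hcc : c₁ ≠ c₂ := fun h => hne (Subtype.ext h)
      rw [Set.disjoint_left]
      intro e hex hey
      refine hcc ?_
      have h1 : c₁ ∈ Set.range (EdgeDecomp.comp G) := by
        rw [hcsF, Set.Finite.mem_toFinset] at hc₁F; exact hc₁F
      have h2 : c₂ ∈ Set.range (EdgeDecomp.comp G) := by
        rw [hcsF, Set.Finite.mem_toFinset] at hc₂F; exact hc₂F
      obtain ⟨v₁, rfl⟩ := h1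
      obtain ⟨v₂, rfl⟩ := h2
      exact EdgeDecomp.comp_eq_of_mem (hxc hex) (hyc hey)
  refine ⟨L.length, fun i => L.get i, ?_, ?_, ?_⟩
  · ext e
    rw [Set.mem_iUnion]
    constructor
    · rintro ⟨i, hi⟩
      exact (hLprops _ (L.get_mem i)).1 hi
    · intro he
      obtain ⟨p, hp, hep⟩ := hcover e he
      obtain ⟨i, hi⟩ := List.get_of_mem hp
      exact ⟨i, hi ▸ hep⟩
  · intro i j hne
    rw [List.pairwise_iff_get] at hpair
    rcases lt_or_gt_of_ne hne with h | h
    · exact hpair i j h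
    · exact (hpair j i h).symm
  · intro i
    obtain ⟨_, h2, h3⟩ := hLprops _ (L.get_mem i)
    refine ⟨h2, ?_⟩
    simp only [Set.mem_insert_iff, Set.mem_singleton_iff]
    rcases h3 with h | h | h | h
    · exact Or.inl h
    · exact Or.inr (Or.inl h)
    · exact Or.inr (Or.inr (Or.inl h))
    · exact Or.inr (Or.inr (Or.inr h))
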